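/- arXiv:math/0010180 — 2 statements merged into one kernel-verified Lean document; each statement's English description precedes it below -/
import Mathlib

section
/- For every τ in the complex upper half-plane and every t ∈ ℝ, setting τ₁ = 1 − 1/τ and τ₂ = −1/(τ − 1) (which again lie in the upper half-plane), with principal-branch complex powers one has (−iτ)^{−t} · (−iτ₁)^{−t} · (−iτ₂)^{−t} = e^{iπt/2}. -/
open Complex Real

/-- For `τ` in the upper half-plane, `τ₁ = 1 - 1/τ`, `τ₂ = -1/(τ-1)`, and real `t`,
with principal-branch complex powers:
`(-iτ)^(-t) * (-iτ₁)^(-t) * (-iτ₂)^(-t) = e^{iπt/2}`. -/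
theorem stmt2 (τ : ℂ) (hτ : 0 < τ.im) (t : ℝ) :
    (-Complex.I * τ) ^ (-(t : ℂ)) * (-Complex.I * (1 - 1 / τ)) ^ (-(t : ℂ)) *
      (-Complex.I * (-1 / (τ - 1))) ^ (-(t : ℂ)) =
      Complex.exp (Complex.I * Real.pi * t / 2) := by
  have hτ0 : τ ≠ 0 := fun h => by simp [h] at hτ
  have hτ1 : τ - 1 ≠ 0 := by
    intro h
    rw [sub_eq_zero] at h
    simp [h] at hτ
  set a := -Complex.I * τ with ha_def
  set b := -Complex.I * (1 - 1 / τ) with hb_def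
  set c := -Complex.I * (-1 / (τ - 1)) with hc_def
  have hare : 0 < a.re := by
    simp only [ha_def, Complex.mul_re, Complex.neg_re, Complex.I_re, Complex.neg_im,
      Complex.I_im]
    linarith
  have hbre : 0 < b.re := by
    have him : 0 < (1 - 1 / τ).im := by
      have h1 : (1 - 1 / τ).im = τ.im / Complex.normSq τ := by
        simp [Complex.sub_im, Complex.one_im, one_div, Complex.inv_im, neg_div, neg_neg]
      rw [h1]
      exact div_pos hτ (Complex.normSq_pos.mpr hτ0)
    simp only [hb_def, Complex.mul_re, Complex.neg_re, Complex.I_re, Complex.neg_im,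
      Complex.I_im]
    linarith
  have hcre : 0 < c.re := by
    have him : 0 < (-1 / (τ - 1)).im := by
      have h1 : (-1 / (τ - 1)).im = τ.im / Complex.normSq (τ - 1) := by
        rw [neg_div, Complex.neg_im, one_div, Complex.inv_im]
        simp [Complex.sub_im]
        ring
      rw [h1]
      exact div_pos hτ (Complex.normSq_pos.mpr hτ1)
    simp only [hc_def, Complex.mul_re, Complex.neg_re, Complex.I_re, Complex.neg_im,
      Complex.I_im]
    linarith
  have ha : a ≠ 0 := fun h => by simp [h] at hare
  have hb : b ≠ 0 := fun h => by simp [h] at hbre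
  have hc : c ≠ 0 := fun h => by simp [h] at hcre
  have habc : a * b * c = -Complex.I := by
    rw [ha_def, hb_def, hc_def]
    field_simp
    linear_combination Complex.I_sq
  -- arg bounds
  have harga : |Complex.arg a| < π / 2 := Complex.abs_arg_lt_pi_div_two_iff.mpr (Or.inl hare)
  have hargb : |Complex.arg b| < π / 2 := Complex.abs_arg_lt_pi_div_two_iff.mpr (Or.inl hbre)
  have hargc : |Complex.arg c| < π / 2 := Complex.abs_arg_lt_pi_div_two_iff.mpr (Or.inl hcre)
  -- key log identity
  have hexp : Complex.exp (Complex.log a + Complex.log b + Complex.log c)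
      = Complex.exp (-(π / 2) * Complex.I) := by
    rw [Complex.exp_add, Complex.exp_add, Complex.exp_log ha, Complex.exp_log hb,
      Complex.exp_log hc, habc]
    rw [show (-(π / 2 : ℂ) * Complex.I) = -(π / 2 : ℂ) * Complex.I by ring,
      Complex.exp_mul_I]
    simp [Complex.cos_neg, Complex.sin_neg]
  obtain ⟨n, hn⟩ := Complex.exp_eq_exp_iff_exists_int.mp hexp
  have him := congrArg Complex.im hn
  simp only [Complex.add_im, Complex.log_im, Complex.mul_im, Complex.neg_im, Complex.I_im,
    Complex.I_re, Complex.ofReal_im, Complex.ofReal_re, Complex.intCast_im, Complex.intCast_re,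
    Complex.div_im, Complex.div_re] at him
  have hpi : (0 : ℝ) < π := Real.pi_pos
  have habs : |Complex.arg a + Complex.arg b + Complex.arg c| < 3 * (π / 2) := by
    calc |Complex.arg a + Complex.arg b + Complex.arg c|
        ≤ |Complex.arg a| + |Complex.arg b| + |Complex.arg c| := abs_add_three _ _ _
      _ < 3 * (π / 2) := by linarith
  rw [abs_lt] at habs
  have hn0 : n = 0 := by
    have h1 : (-3 : ℝ) * (π / 2) < Complex.arg a + Complex.arg b + Complex.arg c := by
      linarith [habs.1]
    have h2 : Complex.arg a + Complex.arg b + Complex.arg c < 3 * (π / 2) := habs.2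
    have hsum : Complex.arg a + Complex.arg b + Complex.arg c = -(π / 2) + n * (2 * π) := by
      rw [him]
      simp [Complex.mul_re, Complex.mul_im, Complex.ofReal_re, Complex.ofReal_im]
    rw [hsum] at h1 h2
    have hlt : (n : ℝ) < 1 := by nlinarith
    have hgt : (-1 : ℝ) < (n : ℝ) := by nlinarith
    have : n < 1 := by exact_mod_cast hlt
    have : -1 < n := by exact_mod_cast hgt
    omega
  rw [hn0] at hn
  push_cast at hn
  have key : Complex.log a + Complex.log b + Complex.log c = -(π / 2) * Complex.I := by
    rw [hn]; ring
  rw [Complex.cpow_def_of_ne_zero ha, Complex.cpow_def_of_ne_zero hb,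
    Complex.cpow_def_of_ne_zero hc, ← Complex.exp_add, ← Complex.exp_add]
  rw [show Complex.log a * (-(t : ℂ)) + Complex.log b * (-(t : ℂ)) + Complex.log c * (-(t : ℂ))
      = (Complex.log a + Complex.log b + Complex.log c) * (-(t : ℂ)) by ring, key]
  congr 1
  ring
end

section
/- Fix an integer n. For i, s ∈ ℕ define rational numbers c(n,i,s) by the polynomial identity binom(n−1+x, i) = Σ_{s=0}^{i} c(n,i,s)·x^s in ℚ[x], where binom(y,i) = y(y−1)⋯(y−i+1)/i!, and set c(n,i,s) = 0 for s > i. Let L(X) = Σ_{j≥1} (−1)^{j−1} X^j / j ∈ ℚ[[X]] be the formal power series of log(1+X). Then for every s ∈ ℕ one has the identity of formal power series Σ_{i=0}^{∞} c(n,i,s)·X^i = (1/s!) · L(X)^s · (1+X)^{n−1} in ℚ[[X]], where (1+X)^{n−1} denotes the integer power of the unit 1+X. -/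
open PowerSeries

/-- The polynomial `binom(n-1+x, i) = (n-1+x)(n-2+x)⋯(n-i+x)/i! ∈ ℚ[x]`. -/
noncomputable def binomPoly (n : ℤ) (i : ℕ) : Polynomial ℚ :=
  ((i.factorial : ℚ)⁻¹) • ∏ j ∈ Finset.range i, (Polynomial.X + Polynomial.C ((n : ℚ) - 1 - j))

/-- The coefficients `c(n,i,s)` defined by `binom(n-1+x, i) = Σ_{s} c(n,i,s) xˢ`
(automatically `0` for `s > i`). -/
noncomputable def cCoeff (n : ℤ) (i s : ℕ) : ℚ := (binomPoly n i).coeff s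

/-- The formal power series `L(X) = Σ_{j≥1} (-1)^{j-1} X^j / j` of `log(1+X)`. -/
noncomputable def Lseries : PowerSeries ℚ :=
  PowerSeries.mk fun j => if j = 0 then 0 else (-1 : ℚ) ^ (j - 1) / j

/-- The integer power `(1+X)^n` of the unit `1+X` in `ℚ[[X]]` (using the power-series
inverse for negative exponents). -/
noncomputable def onePlusXPow (n : ℤ) : PowerSeries ℚ :=
  if 0 ≤ n then (1 + PowerSeries.X) ^ n.toNat
  else ((1 + PowerSeries.X) ^ (-n).toNat)⁻¹

-- uniqueness of solutions of (1+X) F' = C a * F + E with given constant coeff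
theorem ode_uniq (a : ℚ) (E F G : PowerSeries ℚ)
    (hF : (1 + X) * (d⁄dX ℚ F) = C (R := ℚ) a * F + E)
    (hG : (1 + X) * (d⁄dX ℚ G) = C (R := ℚ) a * G + E)
    (h0 : coeff (R := ℚ) 0 F = coeff (R := ℚ) 0 G) : F = G := by
  have key : ∀ (H : PowerSeries ℚ), (1 + X) * (d⁄dX ℚ H) = C (R := ℚ) a * H + E →
      ∀ i : ℕ, ((i:ℚ) + 1) * coeff (R := ℚ) (i+1) H
        = a * coeff (R := ℚ) i H + coeff (R := ℚ) i E - (i:ℚ) * coeff (R := ℚ) i H := by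
    intro H hH i
    have := congrArg (fun f => coeff (R := ℚ) i f) hH
    simp only [add_mul, one_mul, map_add, coeff_C_mul] at this
    rcases i with _ | j
    · simpa [coeff_zero_X_mul, coeff_derivative, mul_comm] using this
    · rw [coeff_succ_X_mul] at this
      simp only [coeff_derivative] at this
      push_cast at this ⊢
      linarith [this]
  ext i
  induction i with
  | zero => exact h0
  | succ j ih =>
    have hFj := key F hF j
    have hGj := key G hG j
    rw [ih] at hFj
    have hne : ((j:ℚ)+1+1) ≠ 0 := by positivity
    have : ((j:ℚ)+1) * coeff (R := ℚ) (j+1) F = ((j:ℚ)+1) * coeff (R := ℚ) (j+1) G := by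
      linarith
    exact mul_left_cancel₀ (by positivity : ((j:ℚ)+1) ≠ 0) this

theorem binomPoly_succ (n : ℤ) (i : ℕ) :
    binomPoly n (i+1) = (((i:ℚ)+1)⁻¹) •
      ((Polynomial.X + Polynomial.C ((n : ℚ) - 1 - i)) * binomPoly n i) := by
  unfold binomPoly
  rw [Finset.prod_range_succ, Nat.factorial_succ]
  push_cast
  rw [mul_inv, Polynomial.smul_eq_C_mul, Polynomial.smul_eq_C_mul, Polynomial.smul_eq_C_mul,
    map_mul]
  ring

theorem cCoeff_rec (n : ℤ) (i s : ℕ) :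
    ((i:ℚ) + 1) * cCoeff n (i+1) s
      = (if s = 0 then 0 else cCoeff n i (s-1)) + ((n:ℚ) - 1 - i) * cCoeff n i s := by
  have h := binomPoly_succ n i
  have hc := congrArg (fun p => Polynomial.coeff p s) h
  simp only [Polynomial.coeff_smul, add_mul, Polynomial.coeff_add,
    Polynomial.coeff_C_mul, smul_eq_mul] at hc
  unfold cCoeff
  rw [hc]
  have hne : ((i:ℚ)+1) ≠ 0 := by positivity
  rcases s with _ | t
  · rw [if_pos rfl]
    have : (Polynomial.X * binomPoly n i).coeff 0 = 0 := by
      simp [Polynomial.coeff_X_mul_zero]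
    rw [this]
    field_simp
  · rw [if_neg (Nat.succ_ne_zero t), Polynomial.coeff_X_mul]
    simp only [Nat.succ_sub_one]
    field_simp

theorem L_deriv : (1 + X) * (d⁄dX ℚ Lseries) = 1 := by
  have hD : (d⁄dX ℚ Lseries) = PowerSeries.mk fun i => (-1 : ℚ) ^ i := by
    ext i
    rw [coeff_derivative]
    simp only [Lseries, coeff_mk, Nat.succ_ne_zero, if_false, Nat.succ_sub_one]
    have : ((i:ℚ)+1) ≠ 0 := by positivity
    push_cast
    field_simp
  rw [hD]
  ext i
  rw [add_mul, one_mul, map_add]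
  rcases i with _ | j
  · simp
  · rw [coeff_succ_X_mul]
    simp [pow_succ]

theorem one_add_X_mul_pow_pred (k : ℕ) (hk : 0 < k) :
    (1 + X : PowerSeries ℚ) * (1 + X) ^ (k - 1) = (1 + X) ^ k := by
  rw [← pow_succ']
  congr 1
  omega

theorem W_deriv (m : ℤ) :
    (1 + X) * (d⁄dX ℚ (onePlusXPow m)) = C (R := ℚ) (m : ℚ) * onePlusXPow m := by
  have hD1 : d⁄dX ℚ (1 + X : PowerSeries ℚ) = 1 := by
    rw [map_add, derivative_X, Derivation.map_one_eq_zero, zero_add]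
  unfold onePlusXPow
  split_ifs with h
  · rcases Nat.eq_zero_or_pos m.toNat with h0 | hpos
    · have hm : m = 0 := by omega
      subst hm
      simp
    · have hm : ((m.toNat : ℚ)) = (m : ℚ) := by
        exact_mod_cast Int.toNat_of_nonneg h
      rw [Derivation.leibniz_pow, hD1]
      simp only [smul_eq_mul, nsmul_eq_mul, mul_one]
      calc (1 + X) * ((m.toNat : PowerSeries ℚ) * (1+X) ^ (m.toNat - 1))
          = (m.toNat : PowerSeries ℚ) * ((1+X) * (1+X) ^ (m.toNat - 1)) := by ring
        _ = C (R := ℚ) (m:ℚ) * (1+X) ^ m.toNat := by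
            rw [one_add_X_mul_pow_pred _ hpos, ← map_natCast (C (R := ℚ)) m.toNat, hm]
  · set k := (-m).toNat with hk
    have hkpos : 0 < k := by omega
    have hm : ((k : ℚ)) = -(m : ℚ) := by
      have : (k : ℤ) = -m := Int.toNat_of_nonneg (by omega)
      exact_mod_cast this
    set Q : PowerSeries ℚ := (1 + X) ^ k with hQ
    have hcc : constantCoeff (R := ℚ) Q ≠ 0 := by
      rw [hQ, map_pow]
      simp
    have hinv : Q⁻¹ * Q = 1 := PowerSeries.inv_mul_cancel Q hcc
    have hDQ : (1 + X) * d⁄dX ℚ Q = (k : PowerSeries ℚ) * Q := by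
      rw [hQ, Derivation.leibniz_pow, hD1]
      simp only [smul_eq_mul, nsmul_eq_mul, mul_one]
      calc (1 + X) * ((k : PowerSeries ℚ) * (1+X) ^ (k - 1))
          = (k : PowerSeries ℚ) * ((1+X) * (1+X) ^ (k-1)) := by ring
        _ = (k : PowerSeries ℚ) * Q := by rw [one_add_X_mul_pow_pred _ hkpos]
    rw [derivative_inv']
    have hmC : C (R := ℚ) (m:ℚ) = -(k : PowerSeries ℚ) := by
      rw [← map_natCast (C (R := ℚ)) k, hm, map_neg, neg_neg]
    rw [hmC]
    calc (1 + X) * (-Q⁻¹ ^ 2 * d⁄dX ℚ Q)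
        = -Q⁻¹ ^ 2 * ((1 + X) * d⁄dX ℚ Q) := by ring
      _ = -Q⁻¹ ^ 2 * ((k : PowerSeries ℚ) * Q) := by rw [hDQ]
      _ = -(k : PowerSeries ℚ) * Q⁻¹ * (Q⁻¹ * Q) := by ring
      _ = -(k : PowerSeries ℚ) * Q⁻¹ := by rw [hinv, mul_one]

theorem G_ode (n : ℤ) (s : ℕ) :
    (1 + X) * (d⁄dX ℚ (PowerSeries.mk fun i => cCoeff n i s))
      = C (R := ℚ) ((n:ℚ) - 1) * PowerSeries.mk (fun i => cCoeff n i s)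
        + (if s = 0 then 0 else PowerSeries.mk fun i => cCoeff n i (s-1)) := by
  ext i
  rw [add_mul, one_mul, map_add, map_add]
  rcases i with _ | j
  · have hrec := cCoeff_rec n 0 s
    simp only [coeff_zero_X_mul, coeff_derivative, coeff_mk, coeff_C_mul,
      apply_ite (coeff (R := ℚ) 0), map_zero, coeff_mk] at *
    push_cast at hrec ⊢
    split_ifs at hrec ⊢ <;> linear_combination hrec
  · have hrec := cCoeff_rec n (j+1) s
    rw [coeff_succ_X_mul]
    simp only [coeff_derivative, coeff_mk, coeff_C_mul,
      apply_ite (coeff (R := ℚ) (j+1)), map_zero] at *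
    push_cast at hrec ⊢
    split_ifs at hrec ⊢ <;> linear_combination hrec

theorem H_ode (n : ℤ) (s : ℕ) :
    (1 + X) * (d⁄dX ℚ (((s.factorial : ℚ)⁻¹) • (Lseries ^ s * onePlusXPow (n-1))))
      = C (R := ℚ) ((n:ℚ) - 1) * (((s.factorial : ℚ)⁻¹) • (Lseries ^ s * onePlusXPow (n-1)))
        + (if s = 0 then 0
           else (((s-1).factorial : ℚ)⁻¹) • (Lseries ^ (s-1) * onePlusXPow (n-1))) := by
  have hW := W_deriv (n-1)
  have hcast : (((n-1 : ℤ)) : ℚ) = (n:ℚ) - 1 := by push_cast; ring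
  rw [hcast] at hW
  have hL := L_deriv
  set W := onePlusXPow (n-1) with hWdef
  rcases s with _ | t
  · simp only [pow_zero, one_mul, Nat.factorial_zero, Nat.cast_one, inv_one, one_smul,
      if_pos rfl, add_zero]
    simpa using hW
  · rw [if_neg (Nat.succ_ne_zero t), Nat.succ_sub_one]
    have hfac : C (R := ℚ) (((t+1).factorial : ℚ)⁻¹) * ((t+1 : ℕ) : PowerSeries ℚ)
        = C (R := ℚ) ((t.factorial : ℚ)⁻¹) := by
      rw [← map_natCast (C (R := ℚ)) (t+1), ← map_mul]
      congr 1
      rw [Nat.factorial_succ]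
      have h1 : ((t.factorial : ℚ)) ≠ 0 := by positivity
      have h2 : ((t : ℚ) + 1) ≠ 0 := by positivity
      push_cast
      field_simp
    simp only [smul_eq_C_mul]
    rw [Derivation.leibniz, derivative_C, smul_zero, add_zero, Derivation.leibniz,
      Derivation.leibniz_pow]
    simp only [smul_eq_mul, nsmul_eq_mul, Nat.add_sub_cancel]
    linear_combination (C (R := ℚ) (((t+1).factorial : ℚ)⁻¹) * Lseries^(t+1)) * hW
      + (C (R := ℚ) (((t+1).factorial : ℚ)⁻¹) * ((t+1 : ℕ) : PowerSeries ℚ) * W * Lseries^t) * hL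
      + (W * Lseries^t) * hfac

theorem ccW (m : ℤ) : constantCoeff (R := ℚ) (onePlusXPow m) = 1 := by
  unfold onePlusXPow
  split_ifs with h
  · simp
  · rw [PowerSeries.constantCoeff_inv]
    simp

theorem cCoeff_zero (n : ℤ) (s : ℕ) : cCoeff n 0 s = if s = 0 then 1 else 0 := by
  unfold cCoeff binomPoly
  simp [Polynomial.coeff_one]

/-- The identity `Σ_{i≥0} c(n,i,s)·Xⁱ = (1/s!)·L(X)ˢ·(1+X)^{n-1}` in `ℚ[[X]]`, used to
establish equation (2.39) of the paper. -/
theorem stmt4 (n : ℤ) (s : ℕ) :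
    PowerSeries.mk (fun i => cCoeff n i s) =
      ((s.factorial : ℚ)⁻¹) • (Lseries ^ s * onePlusXPow (n - 1)) := by
  have hccL : constantCoeff (R := ℚ) Lseries = 0 := by
    simp [Lseries, ← coeff_zero_eq_constantCoeff]
  have hcc : ∀ s : ℕ, coeff (R := ℚ) 0 (((s.factorial : ℚ)⁻¹) • (Lseries ^ s * onePlusXPow (n - 1)))
      = if s = 0 then 1 else 0 := by
    intro s
    rw [coeff_zero_eq_constantCoeff, smul_eq_C_mul, map_mul, map_mul, map_pow, hccL, ccW,
      constantCoeff_C]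
    rcases s with _ | t
    · simp
    · simp [zero_pow (Nat.succ_ne_zero t)]
  induction s with
  | zero =>
    refine ode_uniq ((n:ℚ) - 1) 0 _ _ ?_ ?_ ?_
    · simpa using G_ode n 0
    · simpa using H_ode n 0
    · rw [coeff_mk, cCoeff_zero, hcc]
  | succ t ih =>
    refine ode_uniq ((n:ℚ) - 1) (PowerSeries.mk fun i => cCoeff n i t) _ _ ?_ ?_ ?_
    · simpa using G_ode n (t+1)
    · have h := H_ode n (t+1)
      rw [if_neg (Nat.succ_ne_zero t), Nat.succ_sub_one, ← ih] at h
      exact h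
    · rw [coeff_mk, cCoeff_zero, hcc]
end
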